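/- Let M be an invertible d×d matrix over K whose entries are rational functions of u_0, u_1, λ only, and suppose that for all i, j ∈ {1,…,N} one has ∂/∂u^i_0 ( ∂M/∂u^j_1 · M^{-1} ) = 0. Let a_0 ∈ ℂ^N be such that M(a_0,u_1,λ) is well defined and invertible, and set g := S^{-1}( M(a_0,u_1,λ)^{-1} ). Then the matrix M̂ := S(g)·M·g^{-1} = M(a_0,u_1,λ)^{-1} · M(u_0,u_1,λ) · M(a_0,u_0,λ) has entries that are rational functions of u_0 and λ only (independent of u_1). -/

import Mathlib

/-!
Setup: `KK N` is the field of rational functions over `ℂ` in the commuting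
variables `λ` (here `lam N`) and `u^γ_ℓ` (here `uu N γ ℓ`, `γ : Fin N`, `ℓ : ℤ`),
realized as the fraction field of the multivariate polynomial ring.
`SS N` is the shift automorphism `S` (fixing `ℂ` and `λ`, sending `u^γ_ℓ` to
`u^γ_{ℓ+1}`), and `Sz N ℓ = S^ℓ`.
-/

set_option maxHeartbeats 1000000

noncomputable section

open MvPolynomial

abbrev RR (N : ℕ) : Type := MvPolynomial (Option (Fin N × ℤ)) ℂ
abbrev KK (N : ℕ) : Type := FractionRing (RR N)

def lam (N : ℕ) : KK N := algebraMap (RR N) (KK N) (X none)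
def uu (N : ℕ) (γ : Fin N) (ℓ : ℤ) : KK N := algebraMap (RR N) (KK N) (X (some (γ, ℓ)))

def shiftIdx (N : ℕ) : Option (Fin N × ℤ) ≃ Option (Fin N × ℤ) :=
  Equiv.optionCongr ((Equiv.refl (Fin N)).prodCongr (Equiv.addRight (1:ℤ)))

/-- The shift on polynomials: `λ ↦ λ`, `u^γ_ℓ ↦ u^γ_{ℓ+1}`. -/
def shiftR (N : ℕ) : RR N ≃+* RR N := (renameEquiv ℂ (shiftIdx N)).toRingEquiv

/-- The shift automorphism `S` of the field `KK N`. -/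
def SS (N : ℕ) : RingAut (KK N) := IsFractionRing.ringEquivOfRingEquiv (shiftR N)

/-- `Sz N ℓ = S^ℓ`. -/
def Sz (N : ℕ) (ℓ : ℤ) : KK N ≃+* KK N := SS N ^ ℓ

/-- The subfield of elements that are rational functions of `λ` and the
variables `u^γ_ℓ` with `ℓ ∈ s` only. -/
def depOn (N : ℕ) (s : Set ℤ) : Subfield (KK N) :=
  Subfield.closure (Set.range (algebraMap ℂ (KK N)) ∪ {lam N} ∪
    {x | ∃ γ : Fin N, ∃ ℓ ∈ s, x = uu N γ ℓ})

/-- The substitution `u^γ_0 := a0 γ` on polynomials (fixing `λ` and all other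
variables). -/
def evalAt (N : ℕ) (a0 : Fin N → ℂ) : RR N →+* RR N :=
  (aeval (fun i : Option (Fin N × ℤ) =>
    match i with
    | none => (X none : RR N)
    | some (γ, ℓ) => if ℓ = 0 then C (a0 γ) else X (some (γ, ℓ)))).toRingHom

/-- `SubstAt N a0 x y` means: the rational function `x` is well defined at
`u_0 = a0` (it has a representation `x = p/q` with `q` not vanishing identically
after the substitution `u_0 := a0`) and its value there is the rational
function `y` of the remaining variables. -/
def SubstAt (N : ℕ) (a0 : Fin N → ℂ) (x y : KK N) : Prop :=
  ∃ p q : RR N, evalAt N a0 q ≠ 0 ∧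
    x * algebraMap (RR N) (KK N) q = algebraMap (RR N) (KK N) p ∧
    y * algebraMap (RR N) (KK N) (evalAt N a0 q) = algebraMap (RR N) (KK N) (evalAt N a0 p)

set_option synthInstance.maxHeartbeats 1000000

abbrev σN (N : ℕ) := Option (Fin N × ℤ)

/-- isolate the variable `v` -/
def Ev (N : ℕ) (v : σN N) : RR N ≃ₐ[ℂ] Polynomial (MvPolynomial {w : σN N // w ≠ v} ℂ) :=
  (renameEquiv ℂ (Equiv.optionSubtypeNe v).symm).trans (optionEquivLeft ℂ _)

lemma Ev_X_self (N : ℕ) (v : σN N) : Ev N v (X v) = Polynomial.X := by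
  simp [Ev, renameEquiv_apply, rename_X, Equiv.optionSubtypeNe_symm_self,
    optionEquivLeft_X_none]

lemma Ev_X_ne (N : ℕ) (v w : σN N) (h : w ≠ v) :
    Ev N v (X w) = Polynomial.C (X ⟨w, h⟩) := by
  simp [Ev, renameEquiv_apply, rename_X, Equiv.optionSubtypeNe_symm_of_ne h,
    optionEquivLeft_X_some]

lemma Ev_C (N : ℕ) (v : σN N) (a : ℂ) : Ev N v (C a) = Polynomial.C (C a) := by
  simp [Ev, renameEquiv_apply, rename_C, optionEquivLeft_C]

lemma Ev_pderiv (N : ℕ) (v : σN N) (p : RR N) :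
    Ev N v (pderiv v p) = Polynomial.derivative (Ev N v p) := by
  induction p using MvPolynomial.induction_on with
  | C a => simp [pderiv_C, Ev_C]
  | add p q hp hq => simp [map_add, hp, hq]
  | mul_X p n ih =>
    rw [pderiv_mul, map_add, map_mul, map_mul, map_mul, ih]
    by_cases hn : n = v
    · subst hn
      simp [pderiv_X_self, Ev_X_self, Polynomial.derivative_mul]
    · rw [pderiv_X_of_ne hn, Ev_X_ne N v n hn]
      simp [Polynomial.derivative_mul]

lemma not_mem_vars_of_EvC (N : ℕ) (v : σN N) (p : RR N)
    (h : ∃ r, Ev N v p = Polynomial.C r) : v ∉ p.vars := by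
  obtain ⟨r, hr⟩ := h
  have key : Ev N v (rename (fun w : {w : σN N // w ≠ v} => (w : σN N)) r) = Polynomial.C r := by
    have : ∀ r : MvPolynomial {w : σN N // w ≠ v} ℂ,
        Ev N v (rename (fun w : {w : σN N // w ≠ v} => (w : σN N)) r) = Polynomial.C r := by
      intro r
      induction r using MvPolynomial.induction_on with
      | C a => simp [rename_C, Ev_C, MvPolynomial.algebraMap_eq]
      | add p q hp hq => simp [map_add, hp, hq]
      | mul_X p n ih => simp [map_mul, rename_X, Ev_X_ne N v _ n.2, ih]
    exact this r
  have hp : p = rename (fun w : {w : σN N // w ≠ v} => (w : σN N)) r :=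
    (Ev N v).injective (by rw [hr, key])
  intro hv
  rw [hp] at hv
  have := vars_rename (fun w : {w : σN N // w ≠ v} => (w : σN N)) r hv
  simp only [Finset.mem_image] at this
  obtain ⟨w, _, hw⟩ := this
  exact w.2 hw

lemma EvC_of_not_mem_vars (N : ℕ) (v : σN N) (p : RR N)
    (h : v ∉ p.vars) : ∃ r, Ev N v p = Polynomial.C r := by
  have hp : p ∈ supported ℂ {w : σN N | w ≠ v} := by
    rw [mem_supported]
    intro w hw
    exact fun hwv => h (hwv ▸ hw)
  rw [supported_eq_adjoin_X] at hp
  refine Algebra.adjoin_induction ?_ ?_ ?_ ?_ hp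
  · rintro x ⟨w, hw, rfl⟩
    exact ⟨X ⟨w, hw⟩, Ev_X_ne N v w hw⟩
  · intro a
    refine ⟨C a, ?_⟩
    rw [show (algebraMap ℂ (RR N)) a = C a from rfl, Ev_C]
  · rintro x y - - ⟨rx, hx⟩ ⟨ry, hy⟩
    exact ⟨rx + ry, by rw [map_add, hx, hy, map_add]⟩
  · rintro x y - - ⟨rx, hx⟩ ⟨ry, hy⟩
    exact ⟨rx * ry, by rw [map_mul, hx, hy, map_mul]⟩

lemma not_mem_vars_of_pderiv_eq_zero (N : ℕ) (v : σN N) (p : RR N)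
    (h : pderiv v p = 0) : v ∉ p.vars := by
  apply not_mem_vars_of_EvC
  have hder : Polynomial.derivative (Ev N v p) = 0 := by
    rw [← Ev_pderiv, h, map_zero]
  have h0 := Polynomial.natDegree_eq_zero_of_derivative_eq_zero hder
  exact ⟨(Ev N v p).coeff 0, Polynomial.eq_C_of_natDegree_eq_zero h0⟩

lemma not_mem_vars_of_dvd (N : ℕ) (v : σN N) (p q : RR N)
    (hdvd : p ∣ q) (hq : q ≠ 0) (h : v ∉ q.vars) : v ∉ p.vars := by
  obtain ⟨c, rfl⟩ := hdvd
  obtain ⟨r, hr⟩ := EvC_of_not_mem_vars N v _ h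
  have hp0 : p ≠ 0 := fun h0 => hq (by rw [h0, zero_mul])
  have hc0 : c ≠ 0 := fun h0 => hq (by rw [h0, mul_zero])
  have hEp : Ev N v p ≠ 0 := fun h0 => hp0 ((map_eq_zero_iff _ (Ev N v).injective).mp h0)
  have hEc : Ev N v c ≠ 0 := fun h0 => hc0 ((map_eq_zero_iff _ (Ev N v).injective).mp h0)
  have hdeg : (Ev N v p).natDegree + (Ev N v c).natDegree = 0 := by
    rw [← Polynomial.natDegree_mul hEp hEc, ← map_mul, hr, Polynomial.natDegree_C]
  apply not_mem_vars_of_EvC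
  exact ⟨(Ev N v p).coeff 0,
    Polynomial.eq_C_of_natDegree_eq_zero (Nat.eq_zero_of_add_eq_zero_right hdeg)⟩

lemma pderiv_eq_zero_of_self_dvd (N : ℕ) (v : σN N) (p : RR N)
    (h : p ∣ pderiv v p) : pderiv v p = 0 := by
  by_contra hne
  have hEd : Ev N v (pderiv v p) ≠ 0 :=
    fun h0 => hne ((map_eq_zero_iff _ (Ev N v).injective).mp h0)
  rw [Ev_pderiv] at hEd
  have hdvd : Ev N v p ∣ Polynomial.derivative (Ev N v p) := by
    obtain ⟨c, hc⟩ := h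
    exact ⟨Ev N v c, by rw [← map_mul, ← hc, Ev_pderiv]⟩
  have hle := Polynomial.natDegree_le_of_dvd hdvd hEd
  by_cases h0 : (Ev N v p).natDegree = 0
  · obtain ⟨r, hr⟩ : ∃ r, Ev N v p = Polynomial.C r :=
      ⟨_, Polynomial.eq_C_of_natDegree_eq_zero h0⟩
    rw [hr] at hEd
    simp at hEd
  · exact absurd hle (not_le.mpr (Polynomial.natDegree_derivative_lt h0))

/-! ### Part B: representation of `depOn` -/

abbrev ιK (N : ℕ) : RR N →+* KK N := algebraMap (RR N) (KK N)

lemma ιK_inj (N : ℕ) : Function.Injective (ιK N) := IsFractionRing.injective _ _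

lemma ιK_ne_zero {N : ℕ} {p : RR N} (h : p ≠ 0) : ιK N p ≠ 0 := by
  intro h0; exact h (ιK_inj N (by rw [h0, map_zero]))

/-- the allowed variable set -/
def Vs (N : ℕ) (s : Set ℤ) : Set (σN N) :=
  {v | v = none ∨ ∃ γ : Fin N, ∃ ℓ ∈ s, v = some (γ, ℓ)}

lemma ι_supported_mem_depOn {N : ℕ} {s : Set ℤ} {p : RR N}
    (hp : p ∈ supported ℂ (Vs N s)) : ιK N p ∈ depOn N s := by
  rw [supported_eq_adjoin_X] at hp
  refine Algebra.adjoin_induction ?_ ?_ ?_ ?_ hp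
  · rintro x ⟨w, hw, rfl⟩
    rcases hw with h | ⟨γ, ℓ, hℓ, h⟩
    · subst h
      exact Subfield.subset_closure (Or.inl (Or.inr rfl))
    · subst h
      exact Subfield.subset_closure (Or.inr ⟨γ, ℓ, hℓ, rfl⟩)
  · intro a
    have : ιK N ((algebraMap ℂ (RR N)) a) = algebraMap ℂ (KK N) a :=
      (IsScalarTower.algebraMap_apply ℂ (RR N) (KK N) a).symm
    rw [this]
    exact Subfield.subset_closure (Or.inl (Or.inl ⟨a, rfl⟩))
  · intro x y _ _ hx hy
    rw [map_add]; exact add_mem hx hy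
  · intro x y _ _ hx hy
    rw [map_mul]; exact mul_mem hx hy

lemma mem_depOn_iff {N : ℕ} {s : Set ℤ} {x : KK N} :
    x ∈ depOn N s ↔ ∃ p q : RR N, q ≠ 0 ∧ (↑p.vars ⊆ Vs N s) ∧ (↑q.vars ⊆ Vs N s) ∧
      x * ιK N q = ιK N p := by
  constructor
  · intro hx
    rw [depOn, Subfield.mem_closure_iff] at hx
    obtain ⟨y, hy, z, hz, hyz⟩ := hx
    -- identify the subring closure with the image of the supported subalgebra
    have hsub : Subring.closure (Set.range (algebraMap ℂ (KK N)) ∪ {lam N} ∪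
        {x | ∃ γ : Fin N, ∃ ℓ ∈ s, x = uu N γ ℓ}) =
        ((supported ℂ (Vs N s)).map (IsScalarTower.toAlgHom ℂ (RR N) (KK N))).toSubring := by
      rw [supported_eq_adjoin_X, AlgHom.map_adjoin, Algebra.adjoin_eq_ring_closure]
      congr 1
      rw [Set.union_assoc]
      congr 1
      ext w
      constructor
      · rintro (h | ⟨γ, ℓ, hℓ, h⟩)
        · subst h
          exact ⟨X none, ⟨none, Or.inl rfl, rfl⟩, rfl⟩
        · subst h
          exact ⟨X (some (γ, ℓ)), ⟨some (γ, ℓ), Or.inr ⟨γ, ℓ, hℓ, rfl⟩, rfl⟩, rfl⟩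
      · rintro ⟨_, ⟨v, hv, rfl⟩, rfl⟩
        rcases hv with h | ⟨γ, ℓ, hℓ, h⟩
        · subst h; exact Or.inl rfl
        · subst h; exact Or.inr ⟨γ, ℓ, hℓ, rfl⟩
    rw [hsub] at hy hz
    obtain ⟨p, hp, rfl⟩ := hy
    obtain ⟨q, hq, rfl⟩ := hz
    by_cases hq0 : q = 0
    · refine ⟨0, 1, one_ne_zero, ?_, ?_, ?_⟩
      · simp [vars_0]
      · simp [vars_one]
      · subst hq0
        simp only [map_zero] at hyz
        rw [div_zero] at hyz
        rw [← hyz]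
        simp
    · have hp' : p ∈ supported ℂ (Vs N s) := hp
      have hq' : q ∈ supported ℂ (Vs N s) := hq
      refine ⟨p, q, hq0, (mem_supported.mp hp'), (mem_supported.mp hq'), ?_⟩
      rw [← hyz]
      show ιK N p / ιK N q * ιK N q = ιK N p
      rw [div_mul_cancel₀ _ (ιK_ne_zero hq0)]
  · rintro ⟨p, q, hq0, hp, hq, hx⟩
    have hxe : x = ιK N p * (ιK N q)⁻¹ := by
      field_simp [ιK_ne_zero hq0] at hx ⊢
      exact hx
    rw [hxe]
    exact mul_mem (ι_supported_mem_depOn (mem_supported.mpr hp))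
      (inv_mem (ι_supported_mem_depOn (mem_supported.mpr hq)))

lemma mem_depOn_iff_reduced {N : ℕ} {s : Set ℤ} {x : KK N} (hx : x ∈ depOn N s) :
    ∃ p q : RR N, q ≠ 0 ∧ IsRelPrime p q ∧ (↑p.vars ⊆ Vs N s) ∧ (↑q.vars ⊆ Vs N s) ∧
      x * ιK N q = ιK N p := by
  obtain ⟨p, q, hq0, hp, hq, hxq⟩ := mem_depOn_iff.mp hx
  by_cases hp0 : p = 0
  · refine ⟨0, 1, one_ne_zero, ?_, by simp [vars_0], by simp [vars_one], ?_⟩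
    · intro d _ hd1
      exact isUnit_of_dvd_one hd1
    · subst hp0
      simp only [map_zero] at hxq
      have : x = 0 := by
        have := mul_eq_zero.mp hxq
        rcases this with h | h
        · exact h
        · exact absurd h (ιK_ne_zero hq0)
      simp [this]
  · obtain ⟨p', q', c, hrel, hcp, hcq⟩ :=
      UniqueFactorizationMonoid.exists_reduced_factors' p q hq0
    have hc0 : c ≠ 0 := fun h => hq0 (by rw [← hcq, h, zero_mul])
    have hq'0 : q' ≠ 0 := fun h => hq0 (by rw [← hcq, h, mul_zero])
    refine ⟨p', q', hq'0, hrel, ?_, ?_, ?_⟩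
    · intro v hv
      by_contra hvn
      have : v ∉ p.vars := fun hvp => hvn (hp hvp)
      exact absurd hv (by
        exact_mod_cast not_mem_vars_of_dvd N v p' p ⟨c, by rw [← hcp]; ring⟩ hp0 this)
    · intro v hv
      by_contra hvn
      have : v ∉ q.vars := fun hvq => hvn (hq hvq)
      exact absurd hv (by
        exact_mod_cast not_mem_vars_of_dvd N v q' q ⟨c, by rw [← hcq]; ring⟩ hq0 this)
    · have h1 : x * ιK N (c * q') = ιK N (c * p') := by rw [hcq, hcp]; exact hxq
      rw [map_mul, map_mul] at h1
      have hc : ιK N c ≠ 0 := ιK_ne_zero hc0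
      field_simp at h1 ⊢
      rcases mul_eq_mul_left_iff.mp (by linear_combination (ιK N c) * h1 : ιK N c * (x * ιK N q') = ιK N c * ιK N p') with h | h
      · exact h
      · exact absurd h hc

/-! ### Part C: derivations -/

section Deriv
variable {N : ℕ} (Pd : Fin N → ℤ → Derivation ℂ (KK N) (KK N))
  (hPdlam : ∀ i ℓ, Pd i ℓ (lam N) = 0)
  (hPdu : ∀ i ℓ γ m, Pd i ℓ (uu N γ m) = if γ = i ∧ m = ℓ then 1 else 0)

include hPdlam hPdu in
lemma Pd_algebraMap (i : Fin N) (ℓ : ℤ) (p : RR N) :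
    Pd i ℓ (ιK N p) = ιK N (pderiv (some (i, ℓ)) p) := by
  induction p using MvPolynomial.induction_on with
  | C a =>
    rw [show (ιK N) (C a) = algebraMap ℂ (KK N) a from
      (IsScalarTower.algebraMap_apply ℂ (RR N) (KK N) a).symm]
    rw [Derivation.map_algebraMap, pderiv_C, map_zero]
  | add p q hp hq =>
    simp [map_add, hp, hq]
  | mul_X p n ih =>
    rw [map_mul, Derivation.leibniz, pderiv_mul, map_add, map_mul, map_mul, ih]
    have hXn : Pd i ℓ (ιK N (X n)) = ιK N (pderiv (some (i, ℓ)) (X n)) := by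
      match n with
      | none =>
        rw [show (ιK N) (X none : RR N) = lam N from rfl, hPdlam,
          pderiv_X_of_ne (by simp), map_zero]
      | some (γ, m) =>
        rw [show (ιK N) (X (some (γ, m)) : RR N) = uu N γ m from rfl, hPdu]
        by_cases h : γ = i ∧ m = ℓ
        · obtain ⟨rfl, rfl⟩ := h
          simp [pderiv_X_self]
        · rw [if_neg h, pderiv_X_of_ne, map_zero]
          intro hc
          apply h
          obtain ⟨h1, h2⟩ := Prod.mk.injEq .. ▸ Option.some.injEq .. ▸ hc
          exact ⟨h1, h2⟩
    rw [hXn]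
    rw [smul_eq_mul, smul_eq_mul]
    ring
end Deriv

/-- kernel of a derivation, as a subfield -/
def kerSf {N : ℕ} (D : Derivation ℂ (KK N) (KK N)) : Subfield (KK N) where
  carrier := {x | D x = 0}
  mul_mem' := by
    intro a b ha hb
    simp only [Set.mem_setOf_eq] at *
    rw [Derivation.leibniz, ha, hb, smul_zero, smul_zero, add_zero]
  one_mem' := by simp only [Set.mem_setOf_eq]; exact Derivation.map_one_eq_zero D
  add_mem' := by
    intro a b ha hb
    simp only [Set.mem_setOf_eq] at *
    rw [map_add, ha, hb, add_zero]
  zero_mem' := by simp only [Set.mem_setOf_eq, map_zero]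
  neg_mem' := by
    intro a ha
    simp only [Set.mem_setOf_eq] at *
    rw [map_neg, ha, neg_zero]
  inv_mem' := by
    intro a ha
    simp only [Set.mem_setOf_eq] at *
    by_cases h : a = 0
    · rw [h, inv_zero, map_zero]
    · have h1 : D (a * a⁻¹) = 0 := by
        rw [mul_inv_cancel₀ h, Derivation.map_one_eq_zero]
      rw [Derivation.leibniz, ha, smul_zero, add_zero, smul_eq_mul] at h1
      rcases mul_eq_zero.mp h1 with h2 | h2
      · exact absurd h2 h
      · exact h2

/-- elements of `F` whose image under `D` is in `F`, as a subfield -/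
def stabSf {N : ℕ} (F : Subfield (KK N)) (D : Derivation ℂ (KK N) (KK N)) :
    Subfield (KK N) where
  carrier := {x | x ∈ F ∧ D x ∈ F}
  mul_mem' := by
    rintro a b ⟨ha, ha'⟩ ⟨hb, hb'⟩
    refine ⟨mul_mem ha hb, ?_⟩
    rw [Derivation.leibniz, smul_eq_mul, smul_eq_mul]
    exact add_mem (mul_mem ha hb') (mul_mem hb ha')
  one_mem' := ⟨one_mem F, by rw [Derivation.map_one_eq_zero]; exact zero_mem F⟩
  add_mem' := by
    rintro a b ⟨ha, ha'⟩ ⟨hb, hb'⟩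
    exact ⟨add_mem ha hb, by rw [map_add]; exact add_mem ha' hb'⟩
  zero_mem' := ⟨zero_mem F, by rw [map_zero]; exact zero_mem F⟩
  neg_mem' := by
    rintro a ⟨ha, ha'⟩
    exact ⟨neg_mem ha, by rw [map_neg]; exact neg_mem ha'⟩
  inv_mem' := by
    rintro a ⟨ha, ha'⟩
    by_cases h : a = 0
    · rw [h, inv_zero]
      exact ⟨zero_mem F, by rw [map_zero]; exact zero_mem F⟩
    · refine ⟨inv_mem ha, ?_⟩
      have h1 : D (a * a⁻¹) = 0 := by
        rw [mul_inv_cancel₀ h, Derivation.map_one_eq_zero]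
      rw [Derivation.leibniz, smul_eq_mul, smul_eq_mul] at h1
      have h3 : a⁻¹ * (a * D a⁻¹ + a⁻¹ * D a) = 0 := by rw [h1, mul_zero]
      rw [mul_add, ← mul_assoc, inv_mul_cancel₀ h, one_mul, ← mul_assoc] at h3
      have h2 : D a⁻¹ = -(a⁻¹ * a⁻¹ * D a) := eq_neg_of_add_eq_zero_left h3
      rw [h2]
      exact neg_mem (mul_mem (mul_mem (inv_mem ha) (inv_mem ha)) ha')

section Deriv2
variable {N : ℕ} (Pd : Fin N → ℤ → Derivation ℂ (KK N) (KK N))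
  (hPdlam : ∀ i ℓ, Pd i ℓ (lam N) = 0)
  (hPdu : ∀ i ℓ γ m, Pd i ℓ (uu N γ m) = if γ = i ∧ m = ℓ then 1 else 0)

include hPdlam hPdu in
/-- a partial derivative in a direction not in `s` kills `depOn N s` -/
lemma Pd_eq_zero_of_depOn {s : Set ℤ} {i : Fin N} {ℓ : ℤ} (hℓ : ℓ ∉ s)
    {x : KK N} (hx : x ∈ depOn N s) : Pd i ℓ x = 0 := by
  have : depOn N s ≤ kerSf (Pd i ℓ) := by
    apply Subfield.closure_le.mpr
    rintro y hy
    rcases hy with (⟨a, rfl⟩ | hl) | hy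
    · show Pd i ℓ _ = 0
      exact Derivation.map_algebraMap _ a
    · rw [Set.mem_singleton_iff] at hl
      subst hl
      show Pd i ℓ _ = 0
      rw [hPdlam]
    · obtain ⟨γ, m, hm, rfl⟩ := hy
      show Pd i ℓ _ = 0
      rw [hPdu, if_neg]
      rintro ⟨-, rfl⟩
      exact hℓ hm
  exact this hx

include hPdlam hPdu in
/-- partial derivatives preserve `depOn N s` -/
lemma Pd_mem_of_depOn {s : Set ℤ} {i : Fin N} {ℓ : ℤ}
    {x : KK N} (hx : x ∈ depOn N s) : Pd i ℓ x ∈ depOn N s := by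
  have : depOn N s ≤ stabSf (depOn N s) (Pd i ℓ) := by
    apply Subfield.closure_le.mpr
    rintro y hy
    refine ⟨Subfield.subset_closure hy, ?_⟩
    rcases hy with (⟨a, rfl⟩ | hl) | hy
    · show Pd i ℓ _ ∈ _
      rw [Derivation.map_algebraMap]; exact zero_mem _
    · rw [Set.mem_singleton_iff] at hl
      subst hl
      show Pd i ℓ _ ∈ _
      rw [hPdlam]; exact zero_mem _
    · obtain ⟨γ, m, hm, rfl⟩ := hy
      show Pd i ℓ _ ∈ _
      rw [hPdu]
      split
      · exact one_mem _
      · exact zero_mem _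
  exact (this hx).2
end Deriv2

section Deriv3
variable {N : ℕ} (Pd : Fin N → ℤ → Derivation ℂ (KK N) (KK N))
  (hPdlam : ∀ i ℓ, Pd i ℓ (lam N) = 0)
  (hPdu : ∀ i ℓ γ m, Pd i ℓ (uu N γ m) = if γ = i ∧ m = ℓ then 1 else 0)

include hPdlam hPdu in
lemma Pd_quot (i : Fin N) (ℓ : ℤ) {x : KK N} {p q : RR N}
    (hx : x * ιK N q = ιK N p) :
    Pd i ℓ x * ιK N (q * q) =
      ιK N (pderiv (some (i,ℓ)) p * q - p * pderiv (some (i,ℓ)) q) := by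
  have h1 := congrArg (Pd i ℓ) hx
  rw [Derivation.leibniz, Pd_algebraMap Pd hPdlam hPdu, Pd_algebraMap Pd hPdlam hPdu,
    smul_eq_mul, smul_eq_mul] at h1
  rw [map_mul, map_sub, map_mul, map_mul]
  linear_combination (ιK N q) * h1 - (ιK N (pderiv (some (i,ℓ)) q)) * hx

include hPdlam hPdu in
lemma mem_depOn_diff {s : Set ℤ} {ℓ : ℤ} {x : KK N} (hx : x ∈ depOn N s)
    (hD : ∀ j : Fin N, Pd j ℓ x = 0) : x ∈ depOn N (s \ {ℓ}) := by
  by_cases hx0 : x = 0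
  · subst hx0; exact zero_mem _
  obtain ⟨p, q, hq0, hrel, hpv, hqv, hxq⟩ := mem_depOn_iff_reduced hx
  have hp0 : p ≠ 0 := by
    intro h
    subst h
    rw [map_zero] at hxq
    rcases mul_eq_zero.mp hxq with h | h
    · exact hx0 h
    · exact ιK_ne_zero hq0 h
  have key : ∀ j : Fin N, pderiv (some (j, ℓ)) p = 0 ∧ pderiv (some (j, ℓ)) q = 0 := by
    intro j
    have hquot := Pd_quot Pd hPdlam hPdu j ℓ hxq
    rw [hD j, zero_mul] at hquot
    have heq : pderiv (some (j,ℓ)) p * q = p * pderiv (some (j,ℓ)) q := by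
      have h2 : ιK N (pderiv (some (j,ℓ)) p * q - p * pderiv (some (j,ℓ)) q) = ιK N 0 := by
        rw [map_zero, ← hquot]
      exact sub_eq_zero.mp (ιK_inj N h2)
    have hq_dvd : q ∣ pderiv (some (j,ℓ)) q := by
      have hd : q ∣ pderiv (some (j,ℓ)) q * p :=
        ⟨pderiv (some (j,ℓ)) p, by linear_combination -heq⟩
      exact hrel.symm.dvd_of_dvd_mul_right hd
    have hp_dvd : p ∣ pderiv (some (j,ℓ)) p := by
      have hd : p ∣ pderiv (some (j,ℓ)) p * q := ⟨pderiv (some (j,ℓ)) q, heq⟩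
      exact hrel.dvd_of_dvd_mul_right hd
    exact ⟨pderiv_eq_zero_of_self_dvd N _ p hp_dvd,
      pderiv_eq_zero_of_self_dvd N _ q hq_dvd⟩
  rw [mem_depOn_iff]
  refine ⟨p, q, hq0, ?_, ?_, hxq⟩
  · intro v hv
    rcases hpv hv with h | ⟨γ, m, hm, h⟩
    · exact Or.inl h
    · subst h
      refine Or.inr ⟨γ, m, ⟨hm, ?_⟩, rfl⟩
      intro hmℓ
      rw [Set.mem_singleton_iff] at hmℓ
      subst hmℓ
      exact not_mem_vars_of_pderiv_eq_zero N _ p (key γ).1 (by exact_mod_cast hv)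
  · intro v hv
    rcases hqv hv with h | ⟨γ, m, hm, h⟩
    · exact Or.inl h
    · subst h
      refine Or.inr ⟨γ, m, ⟨hm, ?_⟩, rfl⟩
      intro hmℓ
      rw [Set.mem_singleton_iff] at hmℓ
      subst hmℓ
      exact not_mem_vars_of_pderiv_eq_zero N _ q (key γ).2 (by exact_mod_cast hv)
end Deriv3

/-! ### Part D: the shift -/

lemma SS_ι (N : ℕ) (p : RR N) : SS N (ιK N p) = ιK N (shiftR N p) :=
  IsFractionRing.ringEquivOfRingEquiv_algebraMap (shiftR N) p

lemma SS_symm_ι (N : ℕ) (p : RR N) :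
    (SS N).symm (ιK N p) = ιK N ((shiftR N).symm p) := by
  apply (SS N).injective
  rw [RingEquiv.apply_symm_apply, SS_ι, RingEquiv.apply_symm_apply]

lemma Sz_neg_one_apply (N : ℕ) (x : KK N) : Sz N (-1) x = (SS N).symm x := by
  have : Sz N (-1) = (SS N)⁻¹ := by rw [Sz, zpow_neg_one]
  rw [this]
  rfl

lemma Sz_one_Sz_neg_one (N : ℕ) (x : KK N) : Sz N 1 (Sz N (-1) x) = x := by
  rw [Sz_neg_one_apply, show Sz N 1 = SS N by rw [Sz, zpow_one],
    RingEquiv.apply_symm_apply]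

lemma shiftR_symm_X_some (N : ℕ) (γ : Fin N) (ℓ : ℤ) :
    (shiftR N).symm (X (some (γ, ℓ))) = X (some (γ, ℓ - 1)) := by
  show ((renameEquiv ℂ (shiftIdx N)).toRingEquiv).symm (X (some (γ, ℓ))) = _
  rw [show ((renameEquiv ℂ (shiftIdx N)).toRingEquiv).symm
      = ((renameEquiv ℂ (shiftIdx N)).symm : RR N ≃ₐ[ℂ] RR N) from rfl,
    renameEquiv_symm]
  show rename _ (X (some (γ, ℓ))) = _
  rw [rename_X]
  congr 1

lemma shiftR_symm_X_none (N : ℕ) : (shiftR N).symm (X none : RR N) = X none := by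
  show ((renameEquiv ℂ (shiftIdx N)).toRingEquiv).symm (X none) = _
  rw [show ((renameEquiv ℂ (shiftIdx N)).toRingEquiv).symm
      = ((renameEquiv ℂ (shiftIdx N)).symm : RR N ≃ₐ[ℂ] RR N) from rfl,
    renameEquiv_symm]
  show rename _ (X none) = _
  rw [rename_X]
  rfl

lemma shiftR_symm_C (N : ℕ) (a : ℂ) : (shiftR N).symm (C a : RR N) = C a := by
  show ((renameEquiv ℂ (shiftIdx N)).toRingEquiv).symm (C a) = _
  rw [show ((renameEquiv ℂ (shiftIdx N)).toRingEquiv).symm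
      = ((renameEquiv ℂ (shiftIdx N)).symm : RR N ≃ₐ[ℂ] RR N) from rfl,
    renameEquiv_symm]
  show rename _ (C a) = _
  rw [rename_C]

lemma Szm1_lam (N : ℕ) : Sz N (-1) (lam N) = lam N := by
  rw [Sz_neg_one_apply, lam, show algebraMap (RR N) (KK N) = ιK N from rfl,
    SS_symm_ι, shiftR_symm_X_none]

lemma Szm1_uu (N : ℕ) (γ : Fin N) (ℓ : ℤ) :
    Sz N (-1) (uu N γ ℓ) = uu N γ (ℓ - 1) := by
  rw [Sz_neg_one_apply, uu, show algebraMap (RR N) (KK N) = ιK N from rfl,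
    SS_symm_ι, shiftR_symm_X_some]
  rfl

lemma Szm1_const (N : ℕ) (a : ℂ) :
    Sz N (-1) (algebraMap ℂ (KK N) a) = algebraMap ℂ (KK N) a := by
  rw [Sz_neg_one_apply, IsScalarTower.algebraMap_apply ℂ (RR N) (KK N),
    show algebraMap (RR N) (KK N) = ιK N from rfl, SS_symm_ι,
    show algebraMap ℂ (RR N) a = C a from rfl, shiftR_symm_C]

lemma Szm1_depOn (N : ℕ) {x : KK N} (hx : x ∈ depOn N {1}) :
    Sz N (-1) x ∈ depOn N {0} := by
  have hle : depOn N {1} ≤ Subfield.comap (Sz N (-1) : KK N →+* KK N) (depOn N {0}) := by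
    apply Subfield.closure_le.mpr
    rintro y hy
    rcases hy with (⟨a, rfl⟩ | hl) | hy
    · show Sz N (-1) _ ∈ depOn N {0}
      rw [Szm1_const]
      exact Subfield.subset_closure (Or.inl (Or.inl ⟨a, rfl⟩))
    · rw [Set.mem_singleton_iff] at hl
      subst hl
      show Sz N (-1) _ ∈ depOn N {0}
      rw [Szm1_lam]
      exact Subfield.subset_closure (Or.inl (Or.inr rfl))
    · obtain ⟨γ, m, hm, rfl⟩ := hy
      rw [Set.mem_singleton_iff] at hm
      subst hm
      show Sz N (-1) _ ∈ depOn N {0}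
      rw [Szm1_uu]
      exact Subfield.subset_closure (Or.inr ⟨γ, 0, rfl, by norm_num⟩)
  exact hle hx

/-! ### Part E: evaluation and `SubstAt` -/

section Eval
variable {N : ℕ} (a0 : Fin N → ℂ)

lemma evalAt_X_none : evalAt N a0 (X none) = X none := by
  show aeval _ (X none) = _
  rw [aeval_X]

lemma evalAt_X_some (γ : Fin N) (ℓ : ℤ) :
    evalAt N a0 (X (some (γ, ℓ))) = if ℓ = 0 then C (a0 γ) else X (some (γ, ℓ)) := by
  show aeval _ (X (some (γ, ℓ))) = _
  rw [aeval_X]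

lemma evalAt_C (a : ℂ) : evalAt N a0 (C a) = C a := by
  show aeval _ (C a) = _
  rw [show (C a : RR N) = algebraMap ℂ (RR N) a from rfl, AlgHom.commutes]

lemma evalAt_pderiv (j : Fin N) {ℓv : ℤ} (hℓv : ℓv ≠ 0) (p : RR N) :
    evalAt N a0 (pderiv (some (j, ℓv)) p) = pderiv (some (j, ℓv)) (evalAt N a0 p) := by
  induction p using MvPolynomial.induction_on with
  | C a => rw [pderiv_C, map_zero, evalAt_C, pderiv_C]
  | add p q hp hq => simp only [map_add, hp, hq]
  | mul_X p n ih =>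
    rw [pderiv_mul, map_add, map_mul, map_mul, map_mul, ih, pderiv_mul]
    congr 1
    have hX : evalAt N a0 (pderiv (some (j, ℓv)) (X n)) =
        pderiv (some (j, ℓv)) (evalAt N a0 (X n)) := by
      match n with
      | none =>
        rw [pderiv_X_of_ne (by simp), map_zero, evalAt_X_none, pderiv_X_of_ne (by simp)]
      | some (γ, m) =>
        by_cases h : (some (γ, m) : σN N) = some (j, ℓv)
        · rw [h, pderiv_X_self, map_one, evalAt_X_some, if_neg hℓv, pderiv_X_self]
        · rw [pderiv_X_of_ne h, map_zero, evalAt_X_some]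
          by_cases hm : m = 0
          · rw [if_pos hm, pderiv_C]
          · rw [if_neg hm, pderiv_X_of_ne h]
    rw [hX]

lemma evalAt_fixes {p : RR N} (h : ∀ γ : Fin N, some (γ, (0:ℤ)) ∉ p.vars) :
    evalAt N a0 p = p := by
  have hp : p ∈ supported ℂ {w : σN N | ∀ γ : Fin N, w ≠ some (γ, 0)} := by
    rw [mem_supported]
    intro w hw γ hwγ
    exact h γ (hwγ ▸ hw)
  rw [supported_eq_adjoin_X] at hp
  refine Algebra.adjoin_induction ?_ ?_ ?_ ?_ hp
  · rintro x ⟨w, hw, rfl⟩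
    match w with
    | none => exact evalAt_X_none a0
    | some (γ, m) =>
      rw [evalAt_X_some, if_neg]
      intro hm
      exact hw γ (by rw [hm])
  · intro a
    exact evalAt_C a0 a
  · intro x y _ _ hx hy
    rw [map_add, hx, hy]
  · intro x y _ _ hx hy
    rw [map_mul, hx, hy]

lemma evalAt_supported {s : Set ℤ} {p : RR N} (h : (↑p.vars : Set (σN N)) ⊆ Vs N s) :
    (↑(evalAt N a0 p).vars : Set (σN N)) ⊆ Vs N (s \ {0}) := by
  have hp : p ∈ supported ℂ (Vs N s) := mem_supported.mpr h
  suffices hs : evalAt N a0 p ∈ supported ℂ (Vs N (s \ {0})) from mem_supported.mp hs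
  rw [supported_eq_adjoin_X] at hp
  refine Algebra.adjoin_induction ?_ ?_ ?_ ?_ hp
  · rintro x ⟨w, hw, rfl⟩
    rcases hw with hn | ⟨γ, ℓ, hℓ, hw⟩
    · subst hn
      rw [evalAt_X_none]
      exact X_mem_supported.mpr (Or.inl rfl)
    · subst hw
      rw [evalAt_X_some]
      by_cases h0 : ℓ = 0
      · rw [if_pos h0]
        exact Subalgebra.algebraMap_mem _ (a0 γ)
      · rw [if_neg h0]
        exact X_mem_supported.mpr (Or.inr ⟨γ, ℓ, ⟨hℓ, h0⟩, rfl⟩)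
  · intro a
    rw [show (algebraMap ℂ (RR N)) a = C a from rfl, evalAt_C]
    exact Subalgebra.algebraMap_mem (supported ℂ (Vs N (s \ {0}))) a
  · intro x y _ _ hx hy
    rw [map_add]; exact add_mem hx hy
  · intro x y _ _ hx hy
    rw [map_mul]; exact mul_mem hx hy
end Eval

section Subst
variable {N : ℕ} {a0 : Fin N → ℂ}

lemma substAt_unique {x y y' : KK N} (h : SubstAt N a0 x y) (h' : SubstAt N a0 x y') :
    y = y' := by
  obtain ⟨p, q, hq, hxq, hyq⟩ := h
  obtain ⟨p', q', hq', hxq', hyq'⟩ := h'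
  have hpq : p * q' = p' * q := by
    apply ιK_inj N
    rw [map_mul, map_mul, ← hxq, ← hxq']
    ring
  have hE : evalAt N a0 p * evalAt N a0 q' = evalAt N a0 p' * evalAt N a0 q := by
    rw [← map_mul, ← map_mul, hpq]
  have key : y * (ιK N (evalAt N a0 q) * ιK N (evalAt N a0 q')) =
      y' * (ιK N (evalAt N a0 q) * ιK N (evalAt N a0 q')) := by
    have e1 : ιK N (evalAt N a0 p) * ιK N (evalAt N a0 q') =
        ιK N (evalAt N a0 p') * ιK N (evalAt N a0 q) := by
      rw [← map_mul, ← map_mul, ← map_mul, ← map_mul, hpq]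
    calc y * (ιK N (evalAt N a0 q) * ιK N (evalAt N a0 q'))
        = (y * ιK N (evalAt N a0 q)) * ιK N (evalAt N a0 q') := by ring
      _ = ιK N (evalAt N a0 p) * ιK N (evalAt N a0 q') := by rw [hyq]
      _ = ιK N (evalAt N a0 p') * ιK N (evalAt N a0 q) := e1
      _ = (y' * ιK N (evalAt N a0 q')) * ιK N (evalAt N a0 q) := by rw [hyq']
      _ = y' * (ιK N (evalAt N a0 q) * ιK N (evalAt N a0 q')) := by ring
  have hne : ιK N (evalAt N a0 q) * ιK N (evalAt N a0 q') ≠ 0 :=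
    mul_ne_zero (ιK_ne_zero hq) (ιK_ne_zero hq')
  exact mul_right_cancel₀ hne key

lemma substAt_zero : SubstAt N a0 0 0 :=
  ⟨0, 1, by rw [map_one]; exact one_ne_zero, by simp, by simp⟩

lemma substAt_one : SubstAt N a0 1 1 :=
  ⟨1, 1, by rw [map_one]; exact one_ne_zero, by simp, by simp⟩

lemma substAt_add {x y x' y' : KK N} (h : SubstAt N a0 x y) (h' : SubstAt N a0 x' y') :
    SubstAt N a0 (x + x') (y + y') := by
  obtain ⟨p, q, hq, hxq, hyq⟩ := h
  obtain ⟨p', q', hq', hxq', hyq'⟩ := h'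
  refine ⟨p * q' + p' * q, q * q', by rw [map_mul]; exact mul_ne_zero hq hq', ?_, ?_⟩
  · rw [map_add, map_mul, map_mul, map_mul]
    linear_combination (ιK N q') * hxq + (ιK N q) * hxq'
  · rw [map_add, map_mul, map_mul, map_mul, map_add, map_mul, map_mul, map_mul]
    linear_combination (ιK N (evalAt N a0 q')) * hyq + (ιK N (evalAt N a0 q)) * hyq'

lemma substAt_neg {x y : KK N} (h : SubstAt N a0 x y) : SubstAt N a0 (-x) (-y) := by
  obtain ⟨p, q, hq, hxq, hyq⟩ := h
  exact ⟨-p, q, hq, by rw [map_neg]; linear_combination -hxq,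
    by rw [map_neg, map_neg]; linear_combination -hyq⟩

lemma substAt_mul {x y x' y' : KK N} (h : SubstAt N a0 x y) (h' : SubstAt N a0 x' y') :
    SubstAt N a0 (x * x') (y * y') := by
  obtain ⟨p, q, hq, hxq, hyq⟩ := h
  obtain ⟨p', q', hq', hxq', hyq'⟩ := h'
  refine ⟨p * p', q * q', by rw [map_mul]; exact mul_ne_zero hq hq', ?_, ?_⟩
  · rw [map_mul, map_mul]
    linear_combination (x' * ιK N q') * hxq + ιK N p * hxq'
  · rw [map_mul, map_mul, map_mul, map_mul]
    linear_combination (y' * ιK N (evalAt N a0 q')) * hyq + ιK N (evalAt N a0 p) * hyq'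

lemma substAt_intCast (z : ℤ) : SubstAt N a0 ((z : KK N)) ((z : KK N)) := by
  refine ⟨(z : RR N), 1, by rw [map_one]; exact one_ne_zero, ?_, ?_⟩
  · rw [map_one, map_intCast, mul_one]
  · rw [map_one, map_one, map_intCast, map_intCast, mul_one]

lemma substAt_zsmul {x y : KK N} (z : ℤ) (h : SubstAt N a0 x y) :
    SubstAt N a0 (z • x) (z • y) := by
  rw [zsmul_eq_mul, zsmul_eq_mul]
  exact substAt_mul (substAt_intCast z) h

lemma substAt_inv {x y : KK N} (h : SubstAt N a0 x y) (hy : y ≠ 0) :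
    SubstAt N a0 x⁻¹ y⁻¹ := by
  obtain ⟨p, q, hq, hxq, hyq⟩ := h
  have hEp : evalAt N a0 p ≠ 0 := by
    intro h0
    rw [h0, map_zero] at hyq
    rcases mul_eq_zero.mp hyq with h1 | h1
    · exact hy h1
    · exact ιK_ne_zero hq h1
  have hp0 : p ≠ 0 := by
    intro h0
    rw [h0, map_zero] at hEp
    exact hEp rfl
  have hx0 : x ≠ 0 := by
    intro h0
    rw [h0, zero_mul] at hxq
    exact ιK_ne_zero hp0 hxq.symm
  refine ⟨q, p, hEp, ?_, ?_⟩
  · rw [← hxq]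
    field_simp
  · rw [← hyq]
    have hy' : y ≠ 0 := hy
    field_simp

lemma substAt_sum {ι : Type*} (t : Finset ι) (f g : ι → KK N)
    (h : ∀ i ∈ t, SubstAt N a0 (f i) (g i)) :
    SubstAt N a0 (∑ i ∈ t, f i) (∑ i ∈ t, g i) := by
  classical
  induction t using Finset.induction_on with
  | empty => simpa using substAt_zero
  | insert _ _ hnot ih =>
    rename_i a t
    rw [Finset.sum_insert hnot, Finset.sum_insert hnot]
    exact substAt_add (h a (Finset.mem_insert_self a t))
      (ih fun i hi => h i (Finset.mem_insert_of_mem hi))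

lemma substAt_prod {ι : Type*} (t : Finset ι) (f g : ι → KK N)
    (h : ∀ i ∈ t, SubstAt N a0 (f i) (g i)) :
    SubstAt N a0 (∏ i ∈ t, f i) (∏ i ∈ t, g i) := by
  classical
  induction t using Finset.induction_on with
  | empty => simpa using substAt_one
  | insert _ _ hnot ih =>
    rename_i a t
    rw [Finset.prod_insert hnot, Finset.prod_insert hnot]
    exact substAt_mul (h a (Finset.mem_insert_self a t))
      (ih fun i hi => h i (Finset.mem_insert_of_mem hi))

lemma substAt_self {s : Set ℤ} (hs : ∀ m ∈ s, m ≠ (0:ℤ)) {x : KK N}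
    (hx : x ∈ depOn N s) : SubstAt N a0 x x := by
  obtain ⟨p, q, hq0, hpv, hqv, hxq⟩ := mem_depOn_iff.mp hx
  have hfix : ∀ r : RR N, (↑r.vars : Set (σN N)) ⊆ Vs N s → evalAt N a0 r = r := by
    intro r hr
    apply evalAt_fixes
    intro γ hγ
    rcases hr hγ with h | ⟨γ', ℓ', hℓ', h⟩
    · exact absurd h (Option.some_ne_none _)
    · have := Option.some_injective _ h
      have h2 : (0:ℤ) = ℓ' := congrArg Prod.snd this
      exact hs ℓ' hℓ' (h2.symm)
  exact ⟨p, q, by rw [hfix q hqv]; exact hq0, hxq, by rw [hfix q hqv, hfix p hpv]; exact hxq⟩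

lemma substAt_depOn {s : Set ℤ} {x y : KK N} (h : SubstAt N a0 x y)
    (hx : x ∈ depOn N s) : y ∈ depOn N (s \ {0}) := by
  obtain ⟨p0, q0, hq0, hxq0, hyq0⟩ := h
  by_cases hx0 : x = 0
  · have hy0 : y = 0 :=
      substAt_unique ⟨p0, q0, hq0, hxq0, hyq0⟩ (by rw [hx0]; exact substAt_zero)
    rw [hy0]
    exact zero_mem _
  · obtain ⟨p, q, hqne, hrel, hpv, hqv, hxq⟩ := mem_depOn_iff_reduced hx
    -- q ∣ q0
    have hpq : p * q0 = p0 * q := by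
      apply ιK_inj N
      rw [map_mul, map_mul, ← hxq, ← hxq0]
      ring
    have hdvd : q ∣ q0 := by
      have h1 : q ∣ q0 * p := ⟨p0, by linear_combination hpq⟩
      exact hrel.symm.dvd_of_dvd_mul_right h1
    have hEq : evalAt N a0 q ≠ 0 := by
      obtain ⟨c, rfl⟩ := hdvd
      rw [map_mul] at hq0
      exact fun h0 => hq0 (by rw [h0, zero_mul])
    -- y = ι(E p) / ι(E q)
    have hy : SubstAt N a0 x (ιK N (evalAt N a0 p) * (ιK N (evalAt N a0 q))⁻¹) := by
      refine ⟨p, q, hEq, hxq, ?_⟩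
      show ιK N (evalAt N a0 p) * (ιK N (evalAt N a0 q))⁻¹ * ιK N (evalAt N a0 q)
          = ιK N (evalAt N a0 p)
      rw [mul_assoc, inv_mul_cancel₀ (ιK_ne_zero hEq), mul_one]
    have hyeq := substAt_unique ⟨p0, q0, hq0, hxq0, hyq0⟩ hy
    rw [hyeq]
    exact mul_mem
      (ι_supported_mem_depOn (mem_supported.mpr (evalAt_supported a0 hpv)))
      (inv_mem (ι_supported_mem_depOn (mem_supported.mpr (evalAt_supported a0 hqv))))
end Subst

section SubstPd
variable {N : ℕ} {a0 : Fin N → ℂ} (Pd : Fin N → ℤ → Derivation ℂ (KK N) (KK N))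
  (hPdlam : ∀ i ℓ, Pd i ℓ (lam N) = 0)
  (hPdu : ∀ i ℓ γ m, Pd i ℓ (uu N γ m) = if γ = i ∧ m = ℓ then 1 else 0)

include hPdlam hPdu in
lemma substAt_Pd (j : Fin N) {x y : KK N} (h : SubstAt N a0 x y) :
    SubstAt N a0 (Pd j 1 x) (Pd j 1 y) := by
  obtain ⟨p, q, hq, hxq, hyq⟩ := h
  refine ⟨pderiv (some (j,1)) p * q - p * pderiv (some (j,1)) q, q * q,
    by rw [map_mul]; exact mul_ne_zero hq hq,
    Pd_quot Pd hPdlam hPdu j 1 hxq, ?_⟩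
  have h2 := Pd_quot Pd hPdlam hPdu j 1 (x := y) (p := evalAt N a0 p)
    (q := evalAt N a0 q) hyq
  have e1 : evalAt N a0 (q * q) = evalAt N a0 q * evalAt N a0 q := map_mul _ _ _
  have e2 : evalAt N a0 (pderiv (some (j,1)) p * q - p * pderiv (some (j,1)) q)
      = pderiv (some (j,1)) (evalAt N a0 p) * evalAt N a0 q
        - evalAt N a0 p * pderiv (some (j,1)) (evalAt N a0 q) := by
    rw [map_sub, map_mul, map_mul, evalAt_pderiv a0 j one_ne_zero,
      evalAt_pderiv a0 j one_ne_zero]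
  rw [e1, e2]
  exact h2
end SubstPd

/-! ### Part F: matrices -/

lemma depOn_mono (N : ℕ) {s t : Set ℤ} (h : s ⊆ t) : depOn N s ≤ depOn N t := by
  apply Subfield.closure_le.mpr
  rintro y hy
  rcases hy with (h1 | h2) | hy
  · exact Subfield.subset_closure (Or.inl (Or.inl h1))
  · exact Subfield.subset_closure (Or.inl (Or.inr h2))
  · obtain ⟨γ, m, hm, rfl⟩ := hy
    exact Subfield.subset_closure (Or.inr ⟨γ, m, h hm, rfl⟩)

section Mat
variable {N d : ℕ} {a0 : Fin N → ℂ}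

lemma mat_mul_entry_mem {F : Subfield (KK N)} {A B : Matrix (Fin d) (Fin d) (KK N)}
    (hA : ∀ p q, A p q ∈ F) (hB : ∀ p q, B p q ∈ F) : ∀ p q, (A * B) p q ∈ F := by
  intro p q
  rw [Matrix.mul_apply]
  exact sum_mem (fun i _ => mul_mem (hA p i) (hB i q))

lemma mat_det_mem {F : Subfield (KK N)} {A : Matrix (Fin d) (Fin d) (KK N)}
    (hA : ∀ p q, A p q ∈ F) : A.det ∈ F := by
  rw [Matrix.det_apply]
  refine sum_mem fun τ _ => ?_
  rw [Units.smul_def]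
  exact zsmul_mem (prod_mem fun i _ => hA _ _) _

lemma mat_inv_entry_mem {F : Subfield (KK N)} {A : Matrix (Fin d) (Fin d) (KK N)}
    (hA : ∀ p q, A p q ∈ F) : ∀ p q, A⁻¹ p q ∈ F := by
  intro p q
  rw [Matrix.inv_def, Matrix.smul_apply, Ring.inverse_eq_inv', smul_eq_mul]
  refine mul_mem (inv_mem (mat_det_mem hA)) ?_
  rw [Matrix.adjugate_apply]
  apply mat_det_mem
  intro p' q'
  rw [Matrix.updateRow_apply]
  split
  · rw [Pi.single_apply]
    split
    · exact one_mem F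
    · exact zero_mem F
  · exact hA p' q'

lemma msub_mul {A B A' B' : Matrix (Fin d) (Fin d) (KK N)}
    (hA : ∀ p q, SubstAt N a0 (A p q) (A' p q))
    (hB : ∀ p q, SubstAt N a0 (B p q) (B' p q)) :
    ∀ p q, SubstAt N a0 ((A * B) p q) ((A' * B') p q) := by
  intro p q
  rw [Matrix.mul_apply, Matrix.mul_apply]
  exact substAt_sum _ _ _ fun i _ => substAt_mul (hA p i) (hB i q)

lemma msub_det {A A' : Matrix (Fin d) (Fin d) (KK N)}
    (hA : ∀ p q, SubstAt N a0 (A p q) (A' p q)) :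
    SubstAt N a0 A.det A'.det := by
  rw [Matrix.det_apply, Matrix.det_apply]
  refine substAt_sum _ _ _ fun τ _ => ?_
  rw [Units.smul_def, Units.smul_def]
  exact substAt_zsmul _ (substAt_prod _ _ _ fun i _ => hA _ _)

lemma msub_inv {A A' : Matrix (Fin d) (Fin d) (KK N)}
    (hA : ∀ p q, SubstAt N a0 (A p q) (A' p q)) (hdet' : A'.det ≠ 0) :
    ∀ p q, SubstAt N a0 (A⁻¹ p q) (A'⁻¹ p q) := by
  intro p q
  rw [Matrix.inv_def, Matrix.inv_def, Matrix.smul_apply, Matrix.smul_apply,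
    Ring.inverse_eq_inv', smul_eq_mul, smul_eq_mul]
  refine substAt_mul (substAt_inv (msub_det hA) hdet') ?_
  rw [Matrix.adjugate_apply, Matrix.adjugate_apply]
  apply msub_det
  intro p' q'
  rw [Matrix.updateRow_apply, Matrix.updateRow_apply]
  split
  · rw [Pi.single_apply]
    split
    · exact substAt_one
    · exact substAt_zero
  · exact hA p' q'

lemma matD_mul (D : Derivation ℂ (KK N) (KK N)) (A B : Matrix (Fin d) (Fin d) (KK N)) :
    (A * B).map ⇑D = A.map ⇑D * B + A * B.map ⇑D := by
  ext p q
  simp only [Matrix.map_apply, Matrix.add_apply, Matrix.mul_apply]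
  rw [map_sum, ← Finset.sum_add_distrib]
  congr 1
  ext i
  rw [Derivation.leibniz, smul_eq_mul, smul_eq_mul]
  ring

lemma matD_one (D : Derivation ℂ (KK N) (KK N)) :
    (1 : Matrix (Fin d) (Fin d) (KK N)).map ⇑D = 0 := by
  ext p q
  rw [Matrix.map_apply, Matrix.one_apply, Matrix.zero_apply]
  split
  · exact Derivation.map_one_eq_zero D
  · exact map_zero D
end Mat

/-- Theorem `thmuk1`, matrix part: if the invertible matrix
`M = M(u_0,u_1,λ)` satisfies `∂/∂u^i_0(∂M/∂u^j_1 · M⁻¹) = 0` for all `i, j`,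
`Ma = M(a_0,u_1,λ)` is well defined and invertible, and
`g := S⁻¹(Ma⁻¹)`, then `M̂ := S(g)·M·g⁻¹ = Ma⁻¹ · M · S⁻¹(Ma)` has entries that
are rational functions of `u_0` and `λ` only. -/
theorem statement7 (N d : ℕ) (hN : 0 < N) (hd : 0 < d)
    -- the partial derivatives `∂/∂u^i_ℓ`:
    (Pd : Fin N → ℤ → Derivation ℂ (KK N) (KK N))
    (hPdlam : ∀ i ℓ, Pd i ℓ (lam N) = 0)
    (hPdu : ∀ i ℓ γ m, Pd i ℓ (uu N γ m) = if γ = i ∧ m = ℓ then 1 else 0)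
    -- `M`, invertible, with entries rational in `u_0, u_1, λ` only:
    (M : Matrix (Fin d) (Fin d) (KK N))
    (hMdep : ∀ p q, M p q ∈ depOn N {0, 1})
    (hMdet : M.det ≠ 0)
    -- the condition:
    (hcond : ∀ i j : Fin N, (M.map ⇑(Pd j 1) * M⁻¹).map ⇑(Pd i 0) = 0)
    -- the substituted matrix `Ma = M(a_0,u_1,λ)`, well defined and invertible:
    (a0 : Fin N → ℂ) (Ma : Matrix (Fin d) (Fin d) (KK N))
    (hMa : ∀ p q, SubstAt N a0 (M p q) (Ma p q))
    (hMadet : Ma.det ≠ 0) :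
    ((Ma⁻¹).map ⇑(Sz N (-1))).map ⇑(Sz N 1) * M * ((Ma⁻¹).map ⇑(Sz N (-1)))⁻¹ =
        Ma⁻¹ * M * Ma.map ⇑(Sz N (-1)) ∧
      ∀ p q, (Ma⁻¹ * M * Ma.map ⇑(Sz N (-1))) p q ∈ depOn N {0} := by
  classical
  have hMdetU : IsUnit M.det := Ne.isUnit hMdet
  have hMadetU : IsUnit Ma.det := Ne.isUnit hMadet
  have hMinvM : M⁻¹ * M = 1 := Matrix.nonsing_inv_mul M hMdetU
  have hMaMainv : Ma * Ma⁻¹ = 1 := Matrix.mul_nonsing_inv Ma hMadetU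
  have hMainvMa : Ma⁻¹ * Ma = 1 := Matrix.nonsing_inv_mul Ma hMadetU
  set Mb : Matrix (Fin d) (Fin d) (KK N) := Ma.map ⇑(Sz N (-1)) with hMbdef
  -- set equalities
  have hset0 : ({0,1} : Set ℤ) \ {0} = {1} := by
    ext m
    simp only [Set.mem_diff, Set.mem_insert_iff, Set.mem_singleton_iff]
    omega
  have hset1 : ({0,1} : Set ℤ) \ {1} = {0} := by
    ext m
    simp only [Set.mem_diff, Set.mem_insert_iff, Set.mem_singleton_iff]
    omega
  constructor
  · -- part 1
    have h1 : ((Ma⁻¹).map ⇑(Sz N (-1))).map ⇑(Sz N 1) = Ma⁻¹ := by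
      ext p q
      simp only [Matrix.map_apply]
      exact Sz_one_Sz_neg_one N _
    have h2 : ((Ma⁻¹).map ⇑(Sz N (-1)))⁻¹ = Mb := by
      apply Matrix.inv_eq_right_inv
      rw [hMbdef, show ⇑(Sz N (-1)) = ⇑(Sz N (-1)).toRingHom from rfl, ← Matrix.map_mul,
        hMainvMa, Matrix.map_one _ (map_zero _) (map_one _)]
    rw [h1, h2]
  · -- part 2
    have hMa1 : ∀ p q, Ma p q ∈ depOn N {1} := by
      intro p q
      have := substAt_depOn (hMa p q) (hMdep p q)
      rwa [hset0] at this
    have hMb0 : ∀ p q, Mb p q ∈ depOn N {0} := fun p q => Szm1_depOn N (hMa1 p q)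
    have hmono1 : depOn N {1} ≤ depOn N {0,1} := depOn_mono N (by intro m hm; simp at hm ⊢; omega)
    have hmono0 : depOn N {0} ≤ depOn N {0,1} := depOn_mono N (by intro m hm; simp at hm ⊢; omega)
    have hMhat_dep : ∀ p q, (Ma⁻¹ * M * Mb) p q ∈ depOn N ({0,1} : Set ℤ) :=
      mat_mul_entry_mem
        (mat_mul_entry_mem (mat_inv_entry_mem fun p q => hmono1 (hMa1 p q)) hMdep)
        (fun p q => hmono0 (hMb0 p q))
    intro p q
    have hD : ∀ j : Fin N, Pd j 1 ((Ma⁻¹ * M * Mb) p q) = 0 := by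
      intro j
      -- the key identity
      have hB : Ma.map ⇑(Pd j 1) * Ma⁻¹ = M.map ⇑(Pd j 1) * M⁻¹ := by
        have hBdep : ∀ p q, (M.map ⇑(Pd j 1) * M⁻¹) p q ∈ depOn N ({0,1} : Set ℤ) :=
          mat_mul_entry_mem
            (fun p q => Pd_mem_of_depOn Pd hPdlam hPdu (hMdep p q))
            (mat_inv_entry_mem hMdep)
        have hB1 : ∀ p q, (M.map ⇑(Pd j 1) * M⁻¹) p q ∈ depOn N {1} := by
          intro p q
          have h0 : ∀ i : Fin N, Pd i 0 ((M.map ⇑(Pd j 1) * M⁻¹) p q) = 0 := by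
            intro i
            have := Matrix.ext_iff.mpr (hcond i j) p q
            rwa [Matrix.map_apply, Matrix.zero_apply] at this
          have := mem_depOn_diff Pd hPdlam hPdu (hBdep p q) h0
          rwa [hset0] at this
        have hsub : ∀ p q, SubstAt N a0 ((M.map ⇑(Pd j 1) * M⁻¹) p q)
            ((Ma.map ⇑(Pd j 1) * Ma⁻¹) p q) := by
          apply msub_mul
          · intro p q
            rw [Matrix.map_apply, Matrix.map_apply]
            exact substAt_Pd Pd hPdlam hPdu j (hMa p q)
          · exact msub_inv hMa hMadet
        have hself : ∀ p q, SubstAt N a0 ((M.map ⇑(Pd j 1) * M⁻¹) p q)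
            ((M.map ⇑(Pd j 1) * M⁻¹) p q) := by
          intro p q
          exact substAt_self (s := {1}) (by intro m hm; simp at hm; omega) (hB1 p q)
        ext p q
        exact substAt_unique (hsub p q) (hself p q)
      have hMbD : Mb.map ⇑(Pd j 1) = 0 := by
        ext p q
        rw [Matrix.map_apply, Matrix.zero_apply]
        exact Pd_eq_zero_of_depOn Pd hPdlam hPdu (by simp) (hMb0 p q)
      have hMainvD : (Ma⁻¹).map ⇑(Pd j 1) = -(Ma⁻¹ * Ma.map ⇑(Pd j 1) * Ma⁻¹) := by
        have h1 := matD_mul (Pd j 1) Ma Ma⁻¹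
        rw [hMaMainv, matD_one] at h1
        have h2 : Ma * ((Ma⁻¹).map ⇑(Pd j 1)) = -(Ma.map ⇑(Pd j 1) * Ma⁻¹) :=
          eq_neg_of_add_eq_zero_right h1.symm
        calc (Ma⁻¹).map ⇑(Pd j 1) = 1 * ((Ma⁻¹).map ⇑(Pd j 1)) := by rw [Matrix.one_mul]
          _ = Ma⁻¹ * (Ma * ((Ma⁻¹).map ⇑(Pd j 1))) := by
              rw [← Matrix.mul_assoc, hMainvMa]
          _ = Ma⁻¹ * -(Ma.map ⇑(Pd j 1) * Ma⁻¹) := by rw [h2]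
          _ = -(Ma⁻¹ * Ma.map ⇑(Pd j 1) * Ma⁻¹) := by
              rw [Matrix.mul_neg, Matrix.mul_assoc]
      have key : (Ma⁻¹).map ⇑(Pd j 1) * M + Ma⁻¹ * M.map ⇑(Pd j 1) = 0 := by
        rw [hMainvD]
        have h4 : Ma.map ⇑(Pd j 1) * Ma⁻¹ * M = M.map ⇑(Pd j 1) := by
          rw [hB, Matrix.mul_assoc, hMinvM, Matrix.mul_one]
        have h3 : Ma⁻¹ * Ma.map ⇑(Pd j 1) * Ma⁻¹ * M = Ma⁻¹ * M.map ⇑(Pd j 1) := by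
          calc Ma⁻¹ * Ma.map ⇑(Pd j 1) * Ma⁻¹ * M
              = Ma⁻¹ * (Ma.map ⇑(Pd j 1) * Ma⁻¹ * M) := by
                rw [Matrix.mul_assoc Ma⁻¹ (Ma.map ⇑(Pd j 1)) Ma⁻¹,
                  Matrix.mul_assoc Ma⁻¹ (Ma.map ⇑(Pd j 1) * Ma⁻¹) M]
            _ = Ma⁻¹ * M.map ⇑(Pd j 1) := by rw [h4]
        rw [Matrix.neg_mul, h3, neg_add_cancel]
      have hfinal : (Ma⁻¹ * M * Mb).map ⇑(Pd j 1) = 0 := by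
        rw [matD_mul, matD_mul, hMbD, Matrix.mul_zero, add_zero, key, Matrix.zero_mul]
      have := Matrix.ext_iff.mpr hfinal p q
      rwa [Matrix.map_apply, Matrix.zero_apply] at this
    have := mem_depOn_diff Pd hPdlam hPdu (hMhat_dep p q) hD
    rwa [hset1] at this
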